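/- Counting identity: let X = X₁ ∪ X₂ with X₁, X₂ disjoint of size n/2 each (n even), let c ≥ 1 and 1 ≤ w ≤ ⌊c/2⌋. Define 𝒜 = {A ⊆ X : |A| = c, min(|A∩X₁|, |A∩X₂|) ≥ w} and ℬ = {B ⊆ X : |B| = c+1, min(|B∩X₁|, |B∩X₂|) ≤ w−1}, and let a = |𝒜|, b = |ℬ|. Then (c+1)·b = (n−c)·(C(n,c) − a) − (n − 2w + 2)·C(n/2, w−1)·C(n/2, c−w+1). -/
import Mathlib

lemma aux_count14 {α : Type*} [DecidableEq α] (Y₁ Y₂ : Finset α) (hd : Disjoint Y₁ Y₂)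
    (k j : ℕ) :
    (((Y₁ ∪ Y₂).powersetCard (k + j)).filter (fun S => (S ∩ Y₁).card = k)).card
      = Y₁.card.choose k * Y₂.card.choose j := by
  classical
  rw [← Finset.card_powersetCard, ← Finset.card_powersetCard, ← Finset.card_product]
  apply Finset.card_bij' (fun S _ => (S ∩ Y₁, S ∩ Y₂)) (fun p _ => p.1 ∪ p.2)
  · intro S hS
    simp only [Finset.mem_filter, Finset.mem_powersetCard] at hS
    obtain ⟨⟨hSsub, hScard⟩, hk⟩ := hS
    have hsum : (S ∩ Y₁).card + (S ∩ Y₂).card = S.card := by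
      rw [← Finset.card_union_of_disjoint
        (hd.mono Finset.inter_subset_right Finset.inter_subset_right),
        ← Finset.inter_union_distrib_left, Finset.inter_eq_left.mpr hSsub]
    simp only [Finset.mem_product, Finset.mem_powersetCard]
    exact ⟨⟨Finset.inter_subset_right, hk⟩, ⟨Finset.inter_subset_right, by omega⟩⟩
  · intro p hp
    simp only [Finset.mem_product, Finset.mem_powersetCard] at hp
    obtain ⟨⟨h1, h2⟩, h3, h4⟩ := hp
    have hi1 : (p.1 ∪ p.2) ∩ Y₁ = p.1 := by
      rw [Finset.union_inter_distrib_right, Finset.inter_eq_left.mpr h1,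
        Finset.disjoint_iff_inter_eq_empty.mp (hd.mono_right h3).symm,
        Finset.union_empty]
    simp only [Finset.mem_filter, Finset.mem_powersetCard]
    refine ⟨⟨Finset.union_subset_union h1 h3, ?_⟩, by rw [hi1, h2]⟩
    rw [Finset.card_union_of_disjoint (hd.mono h1 h3), h2, h4]
  · intro S hS
    simp only [Finset.mem_filter, Finset.mem_powersetCard] at hS
    rw [← Finset.inter_union_distrib_left, Finset.inter_eq_left.mpr hS.1.1]
  · intro p hp
    simp only [Finset.mem_product, Finset.mem_powersetCard] at hp
    obtain ⟨⟨h1, h2⟩, h3, h4⟩ := hp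
    have hi1 : (p.1 ∪ p.2) ∩ Y₁ = p.1 := by
      rw [Finset.union_inter_distrib_right, Finset.inter_eq_left.mpr h1,
        Finset.disjoint_iff_inter_eq_empty.mp (hd.mono_right h3).symm,
        Finset.union_empty]
    have hi2 : (p.1 ∪ p.2) ∩ Y₂ = p.2 := by
      rw [Finset.union_inter_distrib_right, Finset.inter_eq_left.mpr h3,
        Finset.disjoint_iff_inter_eq_empty.mp (hd.mono_left h1),
        Finset.empty_union]
    exact Prod.ext hi1 hi2

theorem stmt_14 {α : Type*} [DecidableEq α] (n c w : ℕ) (hev : Even n)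
    (hc : 1 ≤ c) (hw1 : 1 ≤ w) (hw2 : w ≤ c / 2) (hn : 2 * (c + 1) ≤ n)
    (X₁ X₂ : Finset α) (hdisj : Disjoint X₁ X₂)
    (hX₁ : X₁.card = n / 2) (hX₂ : X₂.card = n / 2)
    (𝒜 ℬ : Finset (Finset α))
    (h𝒜 : 𝒜 = ((X₁ ∪ X₂).powersetCard c).filter
      (fun A => w ≤ min (A ∩ X₁).card (A ∩ X₂).card))
    (hℬ : ℬ = ((X₁ ∪ X₂).powersetCard (c + 1)).filter
      (fun B => min (B ∩ X₁).card (B ∩ X₂).card ≤ w - 1)) :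
    ((c : ℤ) + 1) * ℬ.card
      = ((n : ℤ) - c) * ((n.choose c : ℤ) - 𝒜.card)
        - ((n : ℤ) - 2 * w + 2) * ((n / 2).choose (w - 1) : ℤ)
          * ((n / 2).choose (c - w + 1) : ℤ) := by
  classical
  obtain ⟨m, hm⟩ := hev
  have hm2 : n / 2 = m := by omega
  rw [hm2] at hX₁ hX₂ ⊢
  have hcw : 2 * w ≤ c := by omega
  have hcm : c + 1 ≤ m := by omega
  set X : Finset α := X₁ ∪ X₂ with hXdef
  have hXcard : X.card = n := by
    rw [Finset.card_union_of_disjoint hdisj, hX₁, hX₂]; omega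
  -- split of any subset of X
  have hsplit : ∀ S : Finset α, S ⊆ X → (S ∩ X₁).card + (S ∩ X₂).card = S.card := by
    intro S hS
    rw [← Finset.card_union_of_disjoint
      (hdisj.mono Finset.inter_subset_right Finset.inter_subset_right),
      ← Finset.inter_union_distrib_left, Finset.inter_eq_left.mpr hS]
  set 𝒮 : Finset (Finset α) :=
    (X.powersetCard c).filter
      (fun S => min (S ∩ X₁).card (S ∩ X₂).card ≤ w - 1) with h𝒮
  set 𝒯 : Finset (Finset α) :=
    𝒮.filter (fun S => min (S ∩ X₁).card (S ∩ X₂).card = w - 1) with h𝒯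
  set 𝒯' : Finset (Finset α) :=
    𝒮.filter (fun S => ¬ min (S ∩ X₁).card (S ∩ X₂).card = w - 1) with h𝒯'
  -- counts
  have hSA : 𝒮.card + 𝒜.card = n.choose c := by
    have hcongr : 𝒮 = (X.powersetCard c).filter
        (fun S => ¬ w ≤ min (S ∩ X₁).card (S ∩ X₂).card) := by
      rw [h𝒮]
      apply Finset.filter_congr
      intro S _
      omega
    rw [hcongr, h𝒜, add_comm, Finset.card_filter_add_card_filter_not,
      Finset.card_powersetCard, hXcard]
  have hTT : 𝒯.card + 𝒯'.card = 𝒮.card := by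
    rw [h𝒯, h𝒯', Finset.card_filter_add_card_filter_not]
  have hTcard : 𝒯.card = 2 * (m.choose (w - 1) * m.choose (c - w + 1)) := by
    have hTsplit : 𝒯 = ((X.powersetCard c).filter (fun S => (S ∩ X₁).card = w - 1))
        ∪ ((X.powersetCard c).filter (fun S => (S ∩ X₂).card = w - 1)) := by
      ext S
      simp only [h𝒯, h𝒮, Finset.mem_filter, Finset.mem_union, Finset.mem_powersetCard]
      constructor
      · rintro ⟨⟨⟨hsub, hcard⟩, hle⟩, heq⟩
        have := hsplit S hsub
        rw [hcard] at this
        have h9 : (S ∩ X₁).card = w - 1 ∨ (S ∩ X₂).card = w - 1 := by omega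
        rcases h9 with h9 | h9
        · exact Or.inl ⟨⟨hsub, hcard⟩, h9⟩
        · exact Or.inr ⟨⟨hsub, hcard⟩, h9⟩
      · rintro (⟨⟨hsub, hcard⟩, h⟩ | ⟨⟨hsub, hcard⟩, h⟩) <;>
        · have := hsplit S hsub
          rw [hcard] at this
          exact ⟨⟨⟨hsub, hcard⟩, by omega⟩, by omega⟩
    have hdisj12 : Disjoint ((X.powersetCard c).filter (fun S => (S ∩ X₁).card = w - 1))
        ((X.powersetCard c).filter (fun S => (S ∩ X₂).card = w - 1)) := by
      rw [Finset.disjoint_left]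
      intro S h1 h2
      simp only [Finset.mem_filter, Finset.mem_powersetCard] at h1 h2
      have := hsplit S h1.1.1
      rw [h1.1.2] at this
      omega
    have hT1 : ((X.powersetCard c).filter (fun S => (S ∩ X₁).card = w - 1)).card
        = m.choose (w - 1) * m.choose (c - w + 1) := by
      have h := aux_count14 X₁ X₂ hdisj (w - 1) (c - w + 1)
      rw [hX₁, hX₂, show (w - 1) + (c - w + 1) = c by omega] at h
      exact h
    have hT2 : ((X.powersetCard c).filter (fun S => (S ∩ X₂).card = w - 1)).card
        = m.choose (w - 1) * m.choose (c - w + 1) := by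
      have h := aux_count14 X₂ X₁ hdisj.symm (w - 1) (c - w + 1)
      rw [hX₁, hX₂, show (w - 1) + (c - w + 1) = c by omega, Finset.union_comm] at h
      exact h
    rw [hTsplit, Finset.card_union_of_disjoint hdisj12, hT1, hT2]
    ring
  -- per-B count
  have hB : ∀ B ∈ ℬ, (𝒮.filter (fun S => S ⊆ B)).card = c + 1 := by
    intro B hB
    rw [hℬ, Finset.mem_filter, Finset.mem_powersetCard] at hB
    obtain ⟨⟨hBX, hBc⟩, hBmin⟩ := hB
    have heq : 𝒮.filter (fun S => S ⊆ B) = B.powersetCard c := by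
      ext S
      simp only [h𝒮, Finset.mem_filter, Finset.mem_powersetCard]
      constructor
      · rintro ⟨⟨⟨_, hSc⟩, _⟩, hSB⟩
        exact ⟨hSB, hSc⟩
      · rintro ⟨hSB, hSc⟩
        have h1 : (S ∩ X₁).card ≤ (B ∩ X₁).card :=
          Finset.card_le_card (Finset.inter_subset_inter hSB le_rfl)
        have h2 : (S ∩ X₂).card ≤ (B ∩ X₂).card :=
          Finset.card_le_card (Finset.inter_subset_inter hSB le_rfl)
        exact ⟨⟨⟨hSB.trans hBX, hSc⟩, by omega⟩, hSB⟩
    rw [heq, Finset.card_powersetCard, hBc, Nat.choose_succ_self_right]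
  -- per-S count
  have hS : ∀ S ∈ 𝒮, (ℬ.filter (fun B => S ⊆ B)).card =
      if min (S ∩ X₁).card (S ∩ X₂).card = w - 1 then m - (c - w + 1) else n - c := by
    intro S hSmem
    rw [h𝒮, Finset.mem_filter, Finset.mem_powersetCard] at hSmem
    obtain ⟨⟨hSX, hSc⟩, hSmin⟩ := hSmem
    have hsum := hsplit S hSX
    rw [hSc] at hsum
    have hxfacts : ∀ x ∈ X \ S,
        ((x ∈ X₁ ∧ x ∉ X₂) ∨ (x ∈ X₂ ∧ x ∉ X₁)) ∧
        (insert x S ∩ X₁).card = (S ∩ X₁).card + (if x ∈ X₁ then 1 else 0) ∧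
        (insert x S ∩ X₂).card = (S ∩ X₂).card + (if x ∈ X₂ then 1 else 0) := by
      intro x hx
      rw [Finset.mem_sdiff] at hx
      obtain ⟨hxX, hxS⟩ := hx
      have hxor : (x ∈ X₁ ∧ x ∉ X₂) ∨ (x ∈ X₂ ∧ x ∉ X₁) := by
        rcases Finset.mem_union.mp hxX with h | h
        · exact Or.inl ⟨h, Finset.disjoint_left.mp hdisj h⟩
        · exact Or.inr ⟨h, Finset.disjoint_right.mp hdisj h⟩
      refine ⟨hxor, ?_, ?_⟩
      · by_cases h : x ∈ X₁
        · rw [if_pos h, Finset.insert_inter_of_mem h,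
            Finset.card_insert_of_notMem (fun hc => hxS (Finset.mem_inter.mp hc).1)]
        · rw [if_neg h, Finset.insert_inter_of_notMem h, add_zero]
      · by_cases h : x ∈ X₂
        · rw [if_pos h, Finset.insert_inter_of_mem h,
            Finset.card_insert_of_notMem (fun hc => hxS (Finset.mem_inter.mp hc).1)]
        · rw [if_neg h, Finset.insert_inter_of_notMem h, add_zero]
    have himg : ℬ.filter (fun B => S ⊆ B)
        = ((X \ S).filter
            (fun x => min ((insert x S ∩ X₁).card) ((insert x S ∩ X₂).card) ≤ w - 1)).image
          (fun x => insert x S) := by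
      ext B
      simp only [Finset.mem_image, Finset.mem_filter, Finset.mem_sdiff, hℬ,
        Finset.mem_powersetCard]
      constructor
      · rintro ⟨⟨⟨hBX, hBc⟩, hBmin⟩, hSB⟩
        have hcard1 : (B \ S).card = 1 := by
          rw [Finset.card_sdiff_of_subset hSB, hBc, hSc]
          omega
        obtain ⟨x, hx⟩ := Finset.card_eq_one.mp hcard1
        have hxBS : x ∈ B \ S := hx ▸ Finset.mem_singleton_self x
        rw [Finset.mem_sdiff] at hxBS
        have hBeq : B = insert x S := by
          refine (Finset.eq_of_subset_of_card_le (Finset.insert_subset hxBS.1 hSB) ?_).symm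
          rw [Finset.card_insert_of_notMem hxBS.2, hSc, hBc]
        refine ⟨x, ⟨⟨hBX hxBS.1, hxBS.2⟩, ?_⟩, hBeq.symm⟩
        rw [hBeq] at hBmin
        exact hBmin
      · rintro ⟨x, ⟨⟨hxX, hxS⟩, hPx⟩, rfl⟩
        refine ⟨⟨⟨Finset.insert_subset hxX hSX, ?_⟩, hPx⟩, Finset.subset_insert _ _⟩
        rw [Finset.card_insert_of_notMem hxS, hSc]
    have hinj : Set.InjOn (fun x => insert x S)
        ((X \ S).filter
          (fun x => min ((insert x S ∩ X₁).card) ((insert x S ∩ X₂).card) ≤ w - 1)) := by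
      intro x hx y hy hxy
      simp only [Finset.coe_filter, Set.mem_setOf_eq, Finset.mem_sdiff] at hx hy
      simp only [] at hxy
      rcases Finset.mem_insert.mp (hxy ▸ Finset.mem_insert_self x S) with h | h
      · exact h
      · exact absurd h hx.1.2
    rw [himg, Finset.card_image_of_injOn hinj]
    by_cases hmin : min (S ∩ X₁).card (S ∩ X₂).card = w - 1
    · rw [if_pos hmin]
      rcases (show (S ∩ X₁).card = w - 1 ∨ (S ∩ X₂).card = w - 1 by omega) with hcase | hcase
      · have hTeq : (X \ S).filter
            (fun x => min ((insert x S ∩ X₁).card) ((insert x S ∩ X₂).card) ≤ w - 1)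
            = X₂ \ S := by
          ext x
          simp only [Finset.mem_filter, Finset.mem_sdiff]
          constructor
          · rintro ⟨⟨hxX, hxS⟩, hPx⟩
            obtain ⟨hxor, e1, e2⟩ := hxfacts x (Finset.mem_sdiff.mpr ⟨hxX, hxS⟩)
            rcases hxor with ⟨h1, h2⟩ | ⟨h1, h2⟩
            · rw [if_pos h1] at e1
              rw [if_neg h2] at e2
              exfalso
              omega
            · exact ⟨h1, hxS⟩
          · rintro ⟨hxX2, hxS⟩
            have hxX : x ∈ X := Finset.mem_union_right _ hxX2
            obtain ⟨hxor, e1, e2⟩ := hxfacts x (Finset.mem_sdiff.mpr ⟨hxX, hxS⟩)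
            refine ⟨⟨hxX, hxS⟩, ?_⟩
            have h2 : x ∉ X₁ := Finset.disjoint_right.mp hdisj hxX2
            rw [if_neg h2] at e1
            omega
        rw [hTeq, ← Finset.sdiff_inter_self_left,
          Finset.card_sdiff_of_subset Finset.inter_subset_left, hX₂, Finset.inter_comm]
        omega
      · have hTeq : (X \ S).filter
            (fun x => min ((insert x S ∩ X₁).card) ((insert x S ∩ X₂).card) ≤ w - 1)
            = X₁ \ S := by
          ext x
          simp only [Finset.mem_filter, Finset.mem_sdiff]
          constructor
          · rintro ⟨⟨hxX, hxS⟩, hPx⟩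
            obtain ⟨hxor, e1, e2⟩ := hxfacts x (Finset.mem_sdiff.mpr ⟨hxX, hxS⟩)
            rcases hxor with ⟨h1, h2⟩ | ⟨h1, h2⟩
            · exact ⟨h1, hxS⟩
            · rw [if_pos h1] at e2
              rw [if_neg h2] at e1
              exfalso
              omega
          · rintro ⟨hxX1, hxS⟩
            have hxX : x ∈ X := Finset.mem_union_left _ hxX1
            obtain ⟨hxor, e1, e2⟩ := hxfacts x (Finset.mem_sdiff.mpr ⟨hxX, hxS⟩)
            refine ⟨⟨hxX, hxS⟩, ?_⟩
            have h2 : x ∉ X₂ := Finset.disjoint_left.mp hdisj hxX1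
            rw [if_neg h2] at e2
            omega
        rw [hTeq, ← Finset.sdiff_inter_self_left,
          Finset.card_sdiff_of_subset Finset.inter_subset_left, hX₁, Finset.inter_comm]
        omega
    · rw [if_neg hmin]
      have hTeq : (X \ S).filter
          (fun x => min ((insert x S ∩ X₁).card) ((insert x S ∩ X₂).card) ≤ w - 1)
          = X \ S := by
        apply Finset.filter_true_of_mem
        intro x hx
        obtain ⟨hxor, e1, e2⟩ := hxfacts x hx
        rcases hxor with ⟨h1, h2⟩ | ⟨h1, h2⟩
        · rw [if_pos h1] at e1
          rw [if_neg h2] at e2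
          omega
        · rw [if_neg h2] at e1
          rw [if_pos h1] at e2
          omega
      rw [hTeq, Finset.card_sdiff_of_subset hSX, hXcard, hSc]
  -- double counting
  have hdouble : ∑ B ∈ ℬ, (𝒮.filter (fun S => S ⊆ B)).card
      = ∑ S ∈ 𝒮, (ℬ.filter (fun B => S ⊆ B)).card := by
    simp only [Finset.card_filter]
    rw [Finset.sum_comm]
  have hL : ∑ B ∈ ℬ, (𝒮.filter (fun S => S ⊆ B)).card = (c + 1) * ℬ.card := by
    rw [Finset.sum_congr rfl hB, Finset.sum_const, smul_eq_mul, mul_comm]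
  have hR : ∑ S ∈ 𝒮, (ℬ.filter (fun B => S ⊆ B)).card
      = (m - (c - w + 1)) * 𝒯.card + (n - c) * 𝒯'.card := by
    rw [Finset.sum_congr rfl hS, Finset.sum_ite, Finset.sum_const, Finset.sum_const,
      smul_eq_mul, smul_eq_mul, ← h𝒯, ← h𝒯']
    ring
  have key : (c + 1) * ℬ.card = (m - (c - w + 1)) * 𝒯.card + (n - c) * 𝒯'.card := by
    rw [← hL, hdouble, hR]
  -- final arithmetic
  have h1 : c - w + 1 ≤ m := by omega
  have h2 : w ≤ c := by omega
  have h3 : c ≤ n := by omega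
  zify [h1, h2, h3] at key hSA hTT hTcard
  have hw1' : (1 : ℤ) ≤ (w : ℤ) := by exact_mod_cast hw1
  have hmn : (n : ℤ) = 2 * m := by exact_mod_cast (by omega : n = 2 * m)
  linear_combination key + ((n : ℤ) - c) * hTT + ((n : ℤ) - c) * hSA
    + ((w : ℤ) - 1 - m) * hTcard
    + ((m.choose (w - 1) : ℤ) * (m.choose (c - w + 1) : ℤ) - (𝒯.card : ℤ)) * hmn
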